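/- First-order consistency of the continuous algebraic estimator: if y is twice continuously differentiable on a neighborhood of t with |y''| ≤ M there, then |(6/T³) ∫_{t-T}^{t} (2(τ-t) + T) y(τ) dτ - y'(t)| ≤ C·M·T for all sufficiently small T > 0, for some absolute constant C. -/

import Mathlib

set_option maxHeartbeats 1000000

open Set MeasureTheory intervalIntegral

private lemma quad_int (a b c₀ c₁ c₂ : ℝ) :
    ∫ u in a..b, (c₂ * u ^ 2 + c₁ * u + c₀) =
      c₂ * (b ^ 3 - a ^ 3) / 3 + c₁ * (b ^ 2 - a ^ 2) / 2 + c₀ * (b - a) := by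
  have h2 : IntervalIntegrable (fun u : ℝ => c₂ * u ^ 2) volume a b :=
    (Continuous.intervalIntegrable (by fun_prop) a b)
  have h1 : IntervalIntegrable (fun u : ℝ => c₁ * u) volume a b :=
    (Continuous.intervalIntegrable (by fun_prop) a b)
  rw [intervalIntegral.integral_add (h2.add h1) intervalIntegrable_const,
    intervalIntegral.integral_add h2 h1, intervalIntegral.integral_const_mul,
    intervalIntegral.integral_const_mul, integral_id, integral_pow,
    intervalIntegral.integral_const, smul_eq_mul]
  push_cast
  ring

private lemma key (y : ℝ → ℝ) (t M T : ℝ) (hT : 0 < T)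
    (hd1 : ∀ x ∈ Set.Icc (t - T) t, HasDerivAt y (deriv y x) x)
    (hd2 : ∀ x ∈ Set.Icc (t - T) t, HasDerivAt (deriv y) (deriv (deriv y) x) x)
    (hM : ∀ x ∈ Set.Icc (t - T) t, |deriv (deriv y) x| ≤ M) :
    |(6 / T ^ 3) * (∫ τ in (t - T)..t, (2 * (τ - t) + T) * y τ) - deriv y t| ≤ M * T := by
  have htT : t - T ≤ t := by linarith
  have hMnn : 0 ≤ M := le_trans (abs_nonneg _) (hM t (right_mem_Icc.2 htT))
  -- Step A: Lipschitz bound for deriv y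
  have hA : ∀ τ ∈ Icc (t - T) t, |deriv y t - deriv y τ| ≤ M * (t - τ) := by
    intro τ hτ
    have hsub : Icc τ t ⊆ Icc (t - T) t := Icc_subset_Icc hτ.1 le_rfl
    have := norm_image_sub_le_of_norm_deriv_le_segment'
      (f := deriv y) (f' := deriv (deriv y)) (C := M)
      (fun x hx => (hd2 x (hsub hx)).hasDerivWithinAt)
      (fun x hx => hM x (hsub (Ico_subset_Icc_self hx)))
      t (right_mem_Icc.2 hτ.2)
    simpa [Real.norm_eq_abs] using this
  have hcontd : ContinuousOn (deriv y) (Icc (t - T) t) :=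
    fun x hx => (hd2 x hx).continuousAt.continuousWithinAt
  -- Step B: Taylor remainder bound
  have hB : ∀ τ ∈ Icc (t - T) t,
      |y τ - (y t + deriv y t * (τ - t))| ≤ M / 2 * (t - τ) ^ 2 := by
    intro τ hτ
    have hmono : Icc τ t ⊆ Icc (t - T) t := Icc_subset_Icc hτ.1 le_rfl
    have hτt : τ ≤ t := hτ.2
    have hint : IntervalIntegrable (fun s => deriv y s - deriv y t) volume τ t := by
      apply ContinuousOn.intervalIntegrable
      rw [uIcc_of_le hτt]
      exact (hcontd.mono hmono).sub continuousOn_const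
    have hftc : (∫ s in τ..t, (deriv y s - deriv y t)) =
        (y t - deriv y t * t) - (y τ - deriv y t * τ) := by
      apply intervalIntegral.integral_eq_sub_of_hasDerivAt (f := fun s => y s - deriv y t * s)
      · intro x hx
        rw [uIcc_of_le hτt] at hx
        have h := (hd1 x (hmono hx)).sub (((hasDerivAt_id x).const_mul (deriv y t)))
        simp only [id, mul_one] at h
        exact h
      · exact hint
    have habs : |∫ s in τ..t, (deriv y s - deriv y t)| ≤ M / 2 * (t - τ) ^ 2 := by
      calc |∫ s in τ..t, (deriv y s - deriv y t)|
          ≤ ∫ s in τ..t, |deriv y s - deriv y t| :=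
            intervalIntegral.abs_integral_le_integral_abs hτt
        _ ≤ ∫ s in τ..t, M * (t - s) := by
            apply intervalIntegral.integral_mono_on hτt hint.abs
              (Continuous.intervalIntegrable (by fun_prop) τ t)
            intro s hs
            have := hA s (hmono hs)
            calc |deriv y s - deriv y t| = |deriv y t - deriv y s| := abs_sub_comm _ _
              _ ≤ M * (t - s) := this
        _ = M / 2 * (t - τ) ^ 2 := by
            rw [intervalIntegral.integral_const_mul]
            have := intervalIntegral.integral_comp_sub_left (a := τ) (b := t) (fun x => x) t
            rw [this, integral_id]
            ring
    have : y τ - (y t + deriv y t * (τ - t)) =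
        -((∫ s in τ..t, (deriv y s - deriv y t))) := by
      rw [hftc]; ring
    rw [this, abs_neg]
    exact habs
  -- Kernel integral against the linear part
  have IP : (∫ τ in (t - T)..t, (2 * (τ - t) + T) * (y t + deriv y t * (τ - t)))
      = deriv y t * (T ^ 3 / 6) := by
    have hsub : (∫ τ in (t - T)..t, (2 * (τ - t) + T) * (y t + deriv y t * (τ - t)))
        = ∫ u in (t - T - t)..(t - t),
            ((2 * deriv y t) * u ^ 2 + (2 * y t + T * deriv y t) * u + T * y t) := by
      rw [← intervalIntegral.integral_comp_sub_right
        (fun u => (2 * deriv y t) * u ^ 2 + (2 * y t + T * deriv y t) * u + T * y t) t]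
      apply intervalIntegral.integral_congr
      intro τ _
      ring
    rw [hsub, quad_int]
    ring
  -- Continuity / integrability facts
  have hyc : ContinuousOn y (Icc (t - T) t) :=
    fun x hx => (hd1 x hx).continuousAt.continuousWithinAt
  have hKy : IntervalIntegrable (fun τ => (2 * (τ - t) + T) * y τ) volume (t - T) t := by
    apply ContinuousOn.intervalIntegrable
    rw [uIcc_of_le htT]
    exact (Continuous.continuousOn (by fun_prop)).mul hyc
  have hKP : IntervalIntegrable
      (fun τ => (2 * (τ - t) + T) * (y t + deriv y t * (τ - t))) volume (t - T) t :=
    Continuous.intervalIntegrable (by fun_prop) _ _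
  -- split the integral
  have hsplit : (∫ τ in (t - T)..t, (2 * (τ - t) + T) * y τ) - deriv y t * (T ^ 3 / 6)
      = ∫ τ in (t - T)..t,
          (2 * (τ - t) + T) * (y τ - (y t + deriv y t * (τ - t))) := by
    rw [← IP, ← intervalIntegral.integral_sub hKy hKP]
    apply intervalIntegral.integral_congr
    intro τ _
    ring
  have hKR : IntervalIntegrable
      (fun τ => (2 * (τ - t) + T) * (y τ - (y t + deriv y t * (τ - t)))) volume (t - T) t := by
    apply ContinuousOn.intervalIntegrable
    rw [uIcc_of_le htT]
    exact (Continuous.continuousOn (by fun_prop)).mul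
      (hyc.sub (Continuous.continuousOn (by fun_prop)))
  -- bound the remainder integral
  have hEb : |∫ τ in (t - T)..t,
      (2 * (τ - t) + T) * (y τ - (y t + deriv y t * (τ - t)))| ≤ M * T ^ 4 / 6 := by
    calc |∫ τ in (t - T)..t, (2 * (τ - t) + T) * (y τ - (y t + deriv y t * (τ - t)))|
        ≤ ∫ τ in (t - T)..t, |(2 * (τ - t) + T) * (y τ - (y t + deriv y t * (τ - t)))| :=
          intervalIntegral.abs_integral_le_integral_abs htT
      _ ≤ ∫ τ in (t - T)..t, T * (M / 2 * (t - τ) ^ 2) := by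
          apply intervalIntegral.integral_mono_on htT hKR.abs
            (Continuous.intervalIntegrable (by fun_prop) _ _)
          intro τ hτ
          rw [abs_mul]
          have hK : |2 * (τ - t) + T| ≤ T := by
            rw [abs_le]
            constructor <;> [nlinarith [hτ.1, hτ.2]; nlinarith [hτ.1, hτ.2]]
          exact mul_le_mul hK (hB τ hτ) (abs_nonneg _) (le_of_lt hT)
      _ = M * T ^ 4 / 6 := by
          rw [intervalIntegral.integral_const_mul, intervalIntegral.integral_const_mul]
          have := intervalIntegral.integral_comp_sub_left (a := t - T) (b := t) (fun x => x ^ 2) t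
          rw [this, integral_pow]
          push_cast
          ring
  -- conclude
  have hT3 : (0:ℝ) < T ^ 3 := by positivity
  have hrw : (6 / T ^ 3) * (∫ τ in (t - T)..t, (2 * (τ - t) + T) * y τ) - deriv y t
      = (6 / T ^ 3) * ((∫ τ in (t - T)..t, (2 * (τ - t) + T) * y τ) - deriv y t * (T ^ 3 / 6)) := by
    field_simp
  rw [hrw, hsplit, abs_mul, abs_of_pos (by positivity : (0:ℝ) < 6 / T ^ 3)]
  calc (6 / T ^ 3) * |∫ τ in (t - T)..t,
        (2 * (τ - t) + T) * (y τ - (y t + deriv y t * (τ - t)))|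
      ≤ (6 / T ^ 3) * (M * T ^ 4 / 6) := by
        apply mul_le_mul_of_nonneg_left hEb (by positivity)
    _ = M * T := by field_simp

/-- First-order consistency of the continuous algebraic estimator: there is an absolute
constant `C > 0` such that if `y` is twice continuously differentiable on a neighborhood
of `t` with `|y''| ≤ M` there, then for all sufficiently small `T > 0`,
`|(6/T³) ∫_{t-T}^{t} (2(τ-t) + T) y(τ) dτ - y'(t)| ≤ C M T`. -/
theorem stmt16 :
    ∃ C : ℝ, 0 < C ∧
      ∀ (y : ℝ → ℝ) (t M ε : ℝ), 0 < ε →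
        ContDiffOn ℝ 2 y (Set.Ioo (t - ε) (t + ε)) →
        (∀ x ∈ Set.Ioo (t - ε) (t + ε),
          |iteratedDerivWithin 2 y (Set.Ioo (t - ε) (t + ε)) x| ≤ M) →
        ∃ δ : ℝ, 0 < δ ∧ ∀ T : ℝ, 0 < T → T < δ →
          |(6 / T ^ 3) * (∫ τ in (t - T)..t, (2 * (τ - t) + T) * y τ) - deriv y t| ≤
            C * M * T := by
  refine ⟨1, one_pos, fun y t M ε hε hcd hM => ⟨ε, hε, fun T hT hTε => ?_⟩⟩
  set s := Set.Ioo (t - ε) (t + ε) with hs_def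
  have hs : IsOpen s := isOpen_Ioo
  have hsubset : Icc (t - T) t ⊆ s := by
    intro x hx
    exact ⟨by linarith [hx.1], by linarith [hx.2]⟩
  have hu : UniqueDiffOn ℝ s := hs.uniqueDiffOn
  -- first derivative
  have hdiff : DifferentiableOn ℝ y s := hcd.differentiableOn (by norm_num)
  have hd1 : ∀ x ∈ Icc (t - T) t, HasDerivAt y (deriv y x) x := by
    intro x hx
    exact ((hdiff x (hsubset hx)).differentiableAt (hs.mem_nhds (hsubset hx))).hasDerivAt
  -- second derivative
  have hcd' : ContDiffOn ℝ 1 (deriv y) s := hcd.deriv_of_isOpen hs (by norm_num)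
  have hdiff' : DifferentiableOn ℝ (deriv y) s := hcd'.differentiableOn one_ne_zero
  have hd2 : ∀ x ∈ Icc (t - T) t, HasDerivAt (deriv y) (deriv (deriv y) x) x := by
    intro x hx
    exact ((hdiff' x (hsubset hx)).differentiableAt (hs.mem_nhds (hsubset hx))).hasDerivAt
  -- identify the second derivative
  have hiter : ∀ x ∈ s, iteratedDerivWithin 2 y s x = deriv (deriv y) x := by
    intro x hx
    have h1 : Set.EqOn (iteratedDerivWithin 1 y s) (deriv y) s := fun z hz => by
      rw [iteratedDerivWithin_one, derivWithin_of_isOpen hs hz]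
    calc iteratedDerivWithin 2 y s x = derivWithin (iteratedDerivWithin 1 y s) s x :=
          congrFun iteratedDerivWithin_succ x
      _ = derivWithin (deriv y) s x := derivWithin_congr h1 (h1 hx)
      _ = deriv (deriv y) x := derivWithin_of_isOpen hs hx
  have hM' : ∀ x ∈ Icc (t - T) t, |deriv (deriv y) x| ≤ M := by
    intro x hx
    rw [← hiter x (hsubset hx)]
    exact hM x (hsubset hx)
  have := key y t M T hT hd1 hd2 hM'
  simpa using this
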